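/- Suppose Θ, Ξ ∈ A^{⊗(m+1)} (for an algebra A with coproduct Δ and a central element Λ ∈ A such that Λb ≠ 1 for all b ∈ A and (1⊗ε)Δ = id) satisfy (Θ−Ξ)⊗1 = (1/(q+q⁻¹)) · (1^{⊗(m+1)}⊗Λ) · (1^{⊗m}⊗Δ)(Θ−Ξ) in A^{⊗(m+2)}. Then Θ = Ξ. -/

import Mathlib

open TensorProduct

universe u

variable (𝕜 : Type u) [Field 𝕜] (A : Type u) [Ring A] [Algebra 𝕜 A]

/-- `TPow 𝕜 A m` is the `(m+1)`-fold tensor power `A^{⊗(m+1)}`, as a `𝕜`-algebra. -/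
noncomputable def TPow : ℕ → AlgCat.{u} 𝕜
  | 0 => AlgCat.of 𝕜 A
  | (m + 1) => AlgCat.of 𝕜 ((TPow m) ⊗[𝕜] A)

/-- The map `1^{⊗m} ⊗ Δ : A^{⊗(m+1)} → A^{⊗(m+2)}`, applying the coproduct `Δ` to the
last tensor factor. -/
noncomputable def lastDelta (Δ : A →ₗ[𝕜] A ⊗[𝕜] A) :
    (m : ℕ) → (TPow 𝕜 A m →ₗ[𝕜] (TPow 𝕜 A m) ⊗[𝕜] A)
  | 0 => Δ
  | (m + 1) =>
      (TensorProduct.assoc 𝕜 (TPow 𝕜 A m) A A).symm.toLinearMap ∘ₗ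
        TensorProduct.map (LinearMap.id : TPow 𝕜 A m →ₗ[𝕜] TPow 𝕜 A m) Δ

/-- Applying a functional to the first factor intertwines left multiplication by `1 ⊗ Λ`
with left multiplication by `Λ`. -/
lemma functional_mul_lambda {M : Type u} [Ring M] [Algebra 𝕜 M]
    (f : M →ₗ[𝕜] 𝕜) (Λ : A) (x : M ⊗[𝕜] A) :
    (TensorProduct.lid 𝕜 A).toLinearMap.comp (TensorProduct.map f LinearMap.id)
        (((1 : M) ⊗ₜ Λ) * x) =
      Λ * (TensorProduct.lid 𝕜 A).toLinearMap.comp (TensorProduct.map f LinearMap.id) x := by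
  induction x using TensorProduct.induction_on with
  | zero => simp
  | tmul t b =>
      simp [Algebra.TensorProduct.tmul_mul_tmul, mul_smul_comm]
  | add x y hx hy =>
      simp only [mul_add, map_add, hx, hy]

/-- If `Θ, Ξ ∈ A^{⊗(m+1)}` satisfy
`(Θ−Ξ)⊗1 = (q+q⁻¹)⁻¹ · (1^{⊗(m+1)}⊗Λ) · (1^{⊗m}⊗Δ)(Θ−Ξ)` in `A^{⊗(m+2)}`, where `Λ` is a
central element of `A` with no right inverse and `(1⊗ε)Δ = id`, then `Θ = Ξ`. -/
theorem eq_of_tensor_identity (q : 𝕜) (hq : q + q⁻¹ ≠ 0)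
    (Δ : A →ₐ[𝕜] A ⊗[𝕜] A) (ε : A →ₐ[𝕜] 𝕜)
    (hcounit : ∀ a : A,
      (TensorProduct.rid 𝕜 A)
        (TensorProduct.map (LinearMap.id : A →ₗ[𝕜] A) ε.toLinearMap (Δ a)) = a)
    (Λ : A) (hcentral : ∀ a : A, Λ * a = a * Λ) (hΛ : ∀ b : A, Λ * b ≠ 1)
    (m : ℕ) (Θ Ξ : TPow 𝕜 A m)
    (heq : (Θ - Ξ) ⊗ₜ (1 : A) =
      (q + q⁻¹)⁻¹ •
        (((1 : TPow 𝕜 A m) ⊗ₜ Λ) * (lastDelta 𝕜 A Δ.toLinearMap m (Θ - Ξ)))) :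
    Θ = Ξ := by
  set a : TPow 𝕜 A m := Θ - Ξ with ha
  rw [← sub_eq_zero]
  rw [← (Module.forall_dual_apply_eq_zero_iff 𝕜 (Θ - Ξ))]
  intro f
  by_contra hfa
  set F : (TPow 𝕜 A m) ⊗[𝕜] A →ₗ[𝕜] A :=
    (TensorProduct.lid 𝕜 A).toLinearMap.comp (TensorProduct.map f LinearMap.id) with hF
  have h1 : F (a ⊗ₜ (1 : A)) = f a • 1 := by simp [hF]
  have h2 := congrArg F heq
  rw [h1, map_smul, functional_mul_lambda] at h2
  -- h2 : f a • 1 = (q+q⁻¹)⁻¹ • (Λ * F (lastDelta ... a))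
  have : Λ * ((f a)⁻¹ • (q + q⁻¹)⁻¹ • F (lastDelta 𝕜 A Δ.toLinearMap m a)) = 1 := by
    rw [mul_smul_comm, mul_smul_comm, ← h2, smul_smul, inv_mul_cancel₀ hfa, one_smul]
  exact hΛ _ this
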